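/- Let a_k(z) = U_{k−1}(2z−1) where U denotes Chebyshev polynomials of the second kind, and let a_k^{(n)} denote the n-th derivative of a_k evaluated at z = 0. Then a_k^{(n)} = (2^n (−1)^{k+n+1} / k) · ∏_{i=0}^{n} (k² − i²)/(2i+1); in particular a_k^{(1)}(0) = (2/3)(−1)^k k(k²−1) and a_k^{(2)}(0) = (4/15)(−1)^{k−1} k(k²−1)(k²−4). -/

import Mathlib

open Polynomial

/-- The functions `a_k(z) = U_{k-1}(2z-1)` (Chebyshev polynomials of the second
kind), arising from the recurrence `a_k = 2(2z-1)a_{k-1} - a_{k-2}`, `a_0 = 0`,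
`a_1 = 1`. -/
noncomputable def aCheb (k : ℕ) (z : ℝ) : ℝ :=
  (Polynomial.Chebyshev.U ℝ ((k : ℤ) - 1)).eval (2 * z - 1)

noncomputable def PCheb (k : ℕ) : ℝ[X] :=
  (Polynomial.Chebyshev.U ℝ ((k : ℤ) - 1)).comp (2 * X - 1)

lemma PCheb_zero : PCheb 0 = 0 := by
  simp [PCheb, Polynomial.Chebyshev.U_neg_one]

lemma PCheb_one : PCheb 1 = 1 := by
  simp [PCheb, Polynomial.Chebyshev.U_zero]

lemma PCheb_rec (k : ℕ) : PCheb (k+2) = 2*(2*X-1) * PCheb (k+1) - PCheb k := by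
  have h : ((k+2:ℕ):ℤ) - 1 = ((k:ℤ)-1) + 2 := by push_cast; ring
  have h1 : ((k+1:ℕ):ℤ) - 1 = ((k:ℤ)-1) + 1 := by push_cast; ring
  simp only [PCheb, h, h1, Polynomial.Chebyshev.U_add_two]
  simp [Polynomial.sub_comp, Polynomial.mul_comp]

lemma aCheb_eq (k : ℕ) : aCheb k = fun z => (PCheb k).eval z := by
  funext z
  simp [aCheb, PCheb, eval_comp]

lemma iterDeriv_eval (n : ℕ) (p : ℝ[X]) (x : ℝ) :
    iteratedDeriv n (fun z => p.eval z) x = (derivative^[n] p).eval x := by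
  induction n generalizing p with
  | zero => simp
  | succ n ih =>
    rw [iteratedDeriv_succ', Function.iterate_succ_apply]
    have hd : deriv (fun z => p.eval z) = fun z => (derivative p).eval z :=
      funext fun z => Polynomial.deriv (p := p)
    rw [hd, ih]

lemma iter_sub (n : ℕ) (a b : ℝ[X]) :
    derivative^[n] (a - b) = derivative^[n] a - derivative^[n] b := by
  induction n generalizing a b with
  | zero => simp
  | succ n ih => simp [Function.iterate_succ_apply, derivative_sub, ih]

lemma iter_add (n : ℕ) (a b : ℝ[X]) :
    derivative^[n] (a + b) = derivative^[n] a + derivative^[n] b := by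
  induction n generalizing a b with
  | zero => simp
  | succ n ih => simp [Function.iterate_succ_apply, derivative_add, ih]

lemma iter_2mul (n : ℕ) (a : ℝ[X]) :
    derivative^[n] (2 * a) = 2 * derivative^[n] a := by
  rw [show (2:ℝ[X]) = C 2 from (map_ofNat C 2).symm,
    Polynomial.iterate_derivative_C_mul]

lemma leibniz (n : ℕ) : ∀ q : ℝ[X],
    derivative^[n+1] ((2*X-1) * q) =
      (2*X-1) * derivative^[n+1] q + C (2*((n:ℝ)+1)) * derivative^[n] q := by
  induction n with
  | zero =>
    intro q
    simp [derivative_mul]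
    rw [show (C (2:ℝ)) = 2 from map_ofNat C 2]
    ring
  | succ m ih =>
    intro q
    have hd : derivative ((2*X-1) * q) = (2*X-1) * derivative q + 2 * q := by
      simp [derivative_mul]; ring
    rw [Function.iterate_succ_apply, hd, iter_add, iter_2mul, ih (derivative q),
      ← Function.iterate_succ_apply, ← Function.iterate_succ_apply]
    have hc : (C (2 * ((((m+1):ℕ):ℝ) + 1)) : ℝ[X]) = C (2*((m:ℝ)+1)) + 2 := by
      rw [← map_ofNat (C : ℝ →+* ℝ[X]) 2, ← map_add]
      congr 1
      push_cast; ring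
    rw [hc]
    simp only [Nat.succ_eq_add_one]
    ring

noncomputable def gC (n k : ℕ) : ℝ :=
  2^n * (-1:ℝ)^(k+n+1) * k *
    ∏ i ∈ Finset.range n, (((k:ℝ))^2 - ((i:ℝ)+1)^2) / (2*((i:ℝ)+1)+1)

noncomputable def Qp (n : ℕ) (x : ℝ) : ℝ :=
  ∏ j ∈ Finset.range (2*n+1), (x + n - j)

lemma ff_diff (a : ℝ) (m : ℕ) :
    (∏ j ∈ Finset.range (m+1), (a - j)) - ∏ j ∈ Finset.range (m+1), (a - 1 - j)
      = ((m:ℝ)+1) * ∏ j ∈ Finset.range m, (a - 1 - j) := by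
  have h1 : ∏ j ∈ Finset.range (m+1), (a - j)
      = (∏ j ∈ Finset.range m, (a - 1 - j)) * a := by
    rw [Finset.prod_range_succ' (fun j => a - (j:ℝ))]
    simp only [Nat.cast_zero, sub_zero]
    congr 1
    apply Finset.prod_congr rfl
    intro j _
    push_cast; ring
  rw [h1, Finset.prod_range_succ]
  ring

lemma Qp_eq (n : ℕ) (x : ℝ) :
    x * ∏ i ∈ Finset.range n, (x^2 - ((i:ℝ)+1)^2) = Qp n x := by
  induction n with
  | zero => simp [Qp]
  | succ m ih =>
    rw [Finset.prod_range_succ, ← mul_assoc, ih]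
    have conv : Qp (m+1) x = ∏ j ∈ Finset.range ((2*m+1)+1+1), ((x+(m:ℝ)+1) - j) := by
      simp only [Qp]
      rw [show 2*(m+1)+1 = (2*m+1)+1+1 from by ring]
      exact Finset.prod_congr rfl fun j _ => by push_cast; ring
    rw [conv, Finset.prod_range_succ' (fun j => (x+(m:ℝ)+1) - (j:ℝ)),
      Finset.prod_range_succ]
    have conv2 : ∏ j ∈ Finset.range (2*m+1), ((x+(m:ℝ)+1) - (((j:ℕ)+1:ℕ):ℝ)) = Qp m x := by
      simp only [Qp]
      exact Finset.prod_congr rfl fun j _ => by push_cast; ring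
    rw [conv2]
    push_cast
    ring

lemma Q_ident (n : ℕ) (x : ℝ) :
    Qp (n+1) x - 2 * Qp (n+1) (x-1) + Qp (n+1) (x-2)
      = (2*(n:ℝ)+2) * (2*(n:ℝ)+3) * Qp n (x-1) := by
  have c1 : Qp (n+1) x = ∏ j ∈ Finset.range (2*n+2+1), (x + (n:ℝ) + 1 - j) := by
    simp only [Qp]
    rw [show 2*(n+1)+1 = 2*n+2+1 from by ring]
    exact Finset.prod_congr rfl fun j _ => by push_cast; ring
  have c2 : Qp (n+1) (x-1) = ∏ j ∈ Finset.range (2*n+2+1), (x + (n:ℝ) + 1 - 1 - j) := by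
    simp only [Qp]
    rw [show 2*(n+1)+1 = 2*n+2+1 from by ring]
    exact Finset.prod_congr rfl fun j _ => by push_cast; ring
  have c3 : Qp (n+1) (x-2) = ∏ j ∈ Finset.range (2*n+2+1), (x + (n:ℝ) + 1 - 1 - 1 - j) := by
    simp only [Qp]
    rw [show 2*(n+1)+1 = 2*n+2+1 from by ring]
    exact Finset.prod_congr rfl fun j _ => by push_cast; ring
  have c4 : Qp n (x-1) = ∏ j ∈ Finset.range (2*n+1), (x + (n:ℝ) + 1 - 1 - 1 - j) := by
    simp only [Qp]
    exact Finset.prod_congr rfl fun j _ => by push_cast; ring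
  have d1 := ff_diff (x + (n:ℝ) + 1) (2*n+2)
  have d2 := ff_diff (x + (n:ℝ) + 1 - 1) (2*n+2)
  have d3 := ff_diff (x + (n:ℝ) + 1 - 1) (2*n+1)
  rw [show 2*n+2 = (2*n+1)+1 from rfl] at d1 d2
  rw [c1, c2, c3, c4]
  push_cast at d1 d2 d3 ⊢
  linear_combination d1 - d2 + (2*(n:ℝ)+3) * d3

lemma frac_helper (a b c d D t : ℝ) (hD : D ≠ 0) (ht : t ≠ 0)
    (h : a - b + d = c * t) :
    a / (D*t) = b / (D*t) + c / D - d / (D*t) := by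
  field_simp
  linear_combination h

lemma gC_closed (n k : ℕ) :
    gC n k = 2^n * (-1:ℝ)^(k+n+1) * Qp n k
      / ∏ i ∈ Finset.range n, (2*((i:ℝ)+1)+1) := by
  simp only [gC]
  rw [Finset.prod_div_distrib]
  have hQ := Qp_eq n (k:ℝ)
  linear_combination (2^n * (-1:ℝ)^(k+n+1) / ∏ i ∈ Finset.range n, (2*((i:ℝ)+1)+1)) * hQ

lemma g_rec (n k : ℕ) :
    gC n (k+2) = -2 * gC n (k+1) + 4*(n:ℝ)*gC (n-1) (k+1) - gC n k := by
  match n with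
  | 0 =>
    simp only [gC, pow_zero, Finset.range_zero, Finset.prod_empty, Nat.cast_zero,
      Nat.zero_sub]
    rw [show k+2+0+1 = (k+0+1)+2 from by ring, show k+1+0+1 = (k+0+1)+1 from by ring,
      pow_add, pow_add]
    push_cast
    ring
  | (m+1) =>
    rw [gC_closed (m+1) (k+2), gC_closed (m+1) (k+1), gC_closed (m+1) k,
      show (m+1)-1 = m from rfl, gC_closed m (k+1)]
    have s1 : (-1:ℝ)^(k+2+(m+1)+1) = (-1:ℝ)^(k+m) := by
      rw [show k+2+(m+1)+1 = (k+m)+2*2 from by ring, pow_add]; norm_num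
    have s2 : (-1:ℝ)^(k+1+(m+1)+1) = -(-1:ℝ)^(k+m) := by
      rw [show k+1+(m+1)+1 = (k+m)+3 from by ring, pow_add]; norm_num
    have s3 : (-1:ℝ)^(k+1+m+1) = (-1:ℝ)^(k+m) := by
      rw [show k+1+m+1 = (k+m)+2 from by ring, pow_add]; norm_num
    have s4 : (-1:ℝ)^(k+(m+1)+1) = (-1:ℝ)^(k+m) := by
      rw [show k+(m+1)+1 = (k+m)+2 from by ring, pow_add]; norm_num
    rw [s1, s2, s3, s4, Finset.prod_range_succ]
    have hQ := Q_ident m ((k:ℝ)+2)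
    rw [show (k:ℝ)+2-1 = (k:ℝ)+1 from by ring, show (k:ℝ)+2-2 = (k:ℝ) from by ring] at hQ
    have hD' : (∏ i ∈ Finset.range m, (2*((i:ℝ)+1)+1)) ≠ 0 := by positivity
    have h3 : (2*((m:ℝ)+1)+1) ≠ 0 := by positivity
    have hQ' : (2:ℝ)^(m+1)*(-1:ℝ)^(k+m)*Qp (m+1) ((k:ℝ)+2)
          - (-2*((2:ℝ)^(m+1)*(-(-1:ℝ)^(k+m))*Qp (m+1) ((k:ℝ)+1)))
          + (2:ℝ)^(m+1)*(-1:ℝ)^(k+m)*Qp (m+1) (k:ℝ)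
        = (4*((m:ℝ)+1)*((2:ℝ)^m*(-1:ℝ)^(k+m)*Qp m ((k:ℝ)+1))) * (2*((m:ℝ)+1)+1) := by
      linear_combination ((2:ℝ)^(m+1)*(-1:ℝ)^(k+m)) * hQ
    have hh := frac_helper _ _ _ _ _ _ hD' h3 hQ'
    push_cast
    linear_combination hh

lemma gC_zero (n : ℕ) : gC n 0 = 0 := by simp [gC]

lemma gC_one_zero : gC 0 1 = 1 := by norm_num [gC]

lemma gC_one_succ (m : ℕ) : gC (m+1) 1 = 0 := by
  simp only [gC]
  rw [Finset.prod_eq_zero (Finset.mem_range.2 (Nat.succ_pos m))]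
  · ring
  · norm_num

lemma fD_rec (n j : ℕ) :
    (derivative^[n] (PCheb (j+2))).eval 0
      = -2 * (derivative^[n] (PCheb (j+1))).eval 0
        + 4*(n:ℝ)*(derivative^[n-1] (PCheb (j+1))).eval 0
        - (derivative^[n] (PCheb j)).eval 0 := by
  rw [PCheb_rec, iter_sub]
  match n with
  | 0 =>
    simp [eval_mul, eval_sub, eval_ofNat]
  | (m+1) =>
    rw [mul_assoc, iter_2mul, leibniz m (PCheb (j+1)), show (m+1)-1 = m from rfl]
    simp [eval_mul, eval_add, eval_sub, eval_C]
    push_cast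
    ring

lemma main_eq : ∀ k n : ℕ, (derivative^[n] (PCheb k)).eval 0 = gC n k := by
  intro k
  induction k using Nat.strong_induction_on with
  | _ k ih =>
    match k with
    | 0 =>
      intro n
      rw [PCheb_zero, Polynomial.iterate_derivative_zero, gC_zero]
      simp
    | 1 =>
      intro n
      rw [PCheb_one]
      match n with
      | 0 => rw [gC_one_zero]; simp
      | (m+1) =>
        rw [Polynomial.iterate_derivative_one (Nat.succ_pos m), gC_one_succ]
        simp
    | (j+2) =>
      intro n
      rw [fD_rec, ih (j+1) (by omega) n, ih (j+1) (by omega) (n-1),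
        ih j (by omega) n, g_rec]

/-- The `n`-th derivative at `z = 0`:
`a_k^{(n)}(0) = 2^n (-1)^{k+n+1}/k · ∏_{i=0}^{n} (k² - i²)/(2i+1)`; in particular
`a_k^{(1)}(0) = (2/3)(-1)^k k(k²-1)` and `a_k^{(2)}(0) = (4/15)(-1)^{k-1} k(k²-1)(k²-4)`. -/
theorem aCheb_iteratedDeriv_at_zero :
    (∀ (n k : ℕ), 1 ≤ k →
        iteratedDeriv n (aCheb k) 0 =
          2 ^ n * (-1 : ℝ) ^ (k + n + 1) / k *
            ∏ i ∈ Finset.range (n + 1), ((k : ℝ) ^ 2 - (i : ℝ) ^ 2) / (2 * i + 1)) ∧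
      (∀ k : ℕ, 1 ≤ k →
        iteratedDeriv 1 (aCheb k) 0 = 2 / 3 * (-1 : ℝ) ^ k * k * ((k : ℝ) ^ 2 - 1)) ∧
      ∀ k : ℕ, 1 ≤ k →
        iteratedDeriv 2 (aCheb k) 0 =
          4 / 15 * (-1 : ℝ) ^ (k + 1) * k * ((k : ℝ) ^ 2 - 1) * ((k : ℝ) ^ 2 - 4) := by
  have hk0 : ∀ k : ℕ, 1 ≤ k → ((k:ℝ) ≠ 0) := by
    intro k hk
    exact Nat.cast_ne_zero.mpr (by omega)
  have h1 : ∀ (n k : ℕ), 1 ≤ k →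
      iteratedDeriv n (aCheb k) 0 =
        2 ^ n * (-1 : ℝ) ^ (k + n + 1) / k *
          ∏ i ∈ Finset.range (n + 1), ((k : ℝ) ^ 2 - (i : ℝ) ^ 2) / (2 * i + 1) := by
    intro n k hk
    rw [aCheb_eq, iterDeriv_eval, main_eq k n]
    rw [Finset.prod_range_succ' (fun i => ((k : ℝ) ^ 2 - (i : ℝ) ^ 2) / (2 * (i:ℝ) + 1))]
    have conv : ∏ i ∈ Finset.range n, (((k:ℝ))^2 - ((((i:ℕ)+1:ℕ)):ℝ)^2) / (2 * ((((i:ℕ)+1:ℕ)):ℝ) + 1)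
        = ∏ i ∈ Finset.range n, (((k:ℝ))^2 - ((i:ℝ)+1)^2) / (2*((i:ℝ)+1)+1) := by
      exact Finset.prod_congr rfl fun i _ => by push_cast; ring
    rw [conv]
    simp only [gC]
    have hkne := hk0 k hk
    field_simp
    ring
  refine ⟨h1, ?_, ?_⟩
  · intro k hk
    rw [h1 1 k hk]
    rw [Finset.prod_range_succ, Finset.prod_range_one]
    have hkne := hk0 k hk
    have hs : (-1:ℝ)^(k+1+1) = (-1:ℝ)^k := by
      rw [show k+1+1 = k+2 from rfl, pow_add]; norm_num
    rw [hs]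
    push_cast
    field_simp
    rw [pow_succ]
    ring
  · intro k hk
    rw [h1 2 k hk]
    rw [Finset.prod_range_succ, Finset.prod_range_succ, Finset.prod_range_one]
    have hkne := hk0 k hk
    have hs : (-1:ℝ)^(k+2+1) = -(-1:ℝ)^k := by
      rw [show k+2+1 = k+3 from by ring, pow_add]; norm_num
    have hs2 : (-1:ℝ)^(k+1) = -(-1:ℝ)^k := by
      rw [pow_succ]; ring
    rw [hs, hs2]
    push_cast
    field_simp
    ring
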